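/- Let n ≥ 2m with m ≥ 1, let λ, μ be positive real numbers with λ ≠ 1 and μ ≠ 1, and let U := diag(μ, 1, …, 1, 1/μ) ∈ Mₙ(ℂ) (so U ∈ U(H)). Let C : ℕ³ → ℝ be a family of coefficients such that the series F(z,u) := Σ_{r,p,q} C_{rpq} u^r |zₙ|^{2p} ⟨z,z⟩^q converges absolutely for all (z,u) in some neighborhood of the origin in ℂⁿ × ℝ, and suppose F(λ U z, λ² u) = λ² F(z, u) for all (z,u) in that neighborhood. Then for every (r,p,q) with C_{rpq} ≠ 0 one has λ^{r+p+q−1} = μ^p. (This is relation (rellammu) in the proof of the paper's Theorem 2; in particular, together with r + p + q − 1 ≥ 1 it forces p ≥ 1 and the ratio (r + q − 1)/p to take the same value for all non-zero coefficients.) -/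

import Mathlib

set_option maxHeartbeats 1600000

open Set


/- The standard Hermitian matrix of signature (n-m, m) in the anti-diagonal
block form (formformaminus) of the paper. -/
def Hmat (n m : ℕ) : Matrix (Fin n) (Fin n) ℂ := fun i j =>
  if i.1 + j.1 + 1 = n ∧ (i.1 < m ∨ n ≤ i.1 + m) then 1
  else if i = j ∧ m ≤ i.1 ∧ i.1 + m < n then 1 else 0

lemma sum1 (a : ℕ → ℝ) (δ : ℝ) (hδ : 0 < δ)
    (hs : ∀ x ∈ Ioo (0:ℝ) δ, Summable (fun k => |a k| * x ^ k))
    (h0 : ∀ x ∈ Ioo (0:ℝ) δ, ∑' k, a k * x ^ k = 0) : ∀ k, a k = 0 := by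
  intro k
  induction k using Nat.strong_induction_on with
  | _ k ih =>
  set x0 : ℝ := δ / 2 with hx0def
  have hx00 : 0 < x0 := by positivity
  have hx0 : x0 ∈ Ioo (0:ℝ) δ := ⟨hx00, by rw [hx0def]; linarith⟩
  set S : ℝ := ∑' j, |a j| * x0 ^ j with hSdef
  have hS0 : 0 ≤ S := tsum_nonneg (fun j => by positivity)
  set M : ℝ := S / x0 ^ (k + 1) with hMdef
  have hM0 : 0 ≤ M := by positivity
  have claim : ∀ x, 0 < x → x ≤ x0 → |a k| ≤ M * x := by
    intro x hx hxx0
    have hxI : x ∈ Ioo (0:ℝ) δ := ⟨hx, lt_of_le_of_lt hxx0 hx0.2⟩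
    have hsa : Summable (fun j => |a j| * x ^ j) := hs x hxI
    have hsum : Summable (fun j => a j * x ^ j) := by
      apply Summable.of_abs
      apply hsa.congr
      intro j
      rw [abs_mul, abs_pow, abs_of_pos hx]
    have hsplit := Summable.sum_add_tsum_nat_add (f := fun j => a j * x ^ j) k hsum
    rw [h0 x hxI] at hsplit
    have hrange : (∑ i ∈ Finset.range k, a i * x ^ i) = 0 :=
      Finset.sum_eq_zero fun i hi => by rw [ih i (Finset.mem_range.mp hi)]; ring
    rw [hrange, zero_add] at hsplit
    have hsum2 : Summable (fun i => a (i + k) * x ^ (i + k)) :=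
      (summable_nat_add_iff k).mpr hsum
    have hzadd := Summable.tsum_eq_zero_add hsum2
    rw [hsplit] at hzadd
    have hsum3 : Summable (fun i => a (i + 1 + k) * x ^ (i + 1 + k)) :=
      (summable_nat_add_iff 1).mpr hsum2
    have hak : a k * x ^ k = -∑' i, a (i + 1 + k) * x ^ (i + 1 + k) := by
      simp only [Nat.zero_add] at hzadd; linarith
    -- bound the tail
    have hsatail : Summable (fun i => |a (i + 1 + k)| * x ^ (i + 1 + k)) :=
      (summable_nat_add_iff 1).mpr ((summable_nat_add_iff k).mpr hsa)
    have hsx0 : Summable (fun j => |a j| * x0 ^ j) := hs x0 hx0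
    have hsx0tail : Summable (fun i => |a (i + 1 + k)| * x0 ^ (i + 1 + k)) :=
      (summable_nat_add_iff 1).mpr ((summable_nat_add_iff k).mpr hsx0)
    have hbound0 : |a k| * x ^ k ≤ ∑' i, |a (i + 1 + k)| * x ^ (i + 1 + k) := by
      have habs : |a k| * x ^ k = |a k * x ^ k| := by
        rw [abs_mul, abs_pow, abs_of_pos hx]
      rw [habs, hak, abs_neg]
      calc |∑' i, a (i + 1 + k) * x ^ (i + 1 + k)|
          ≤ ∑' i, |a (i + 1 + k) * x ^ (i + 1 + k)| := by
            have hnrm : Summable (fun i => ‖a (i + 1 + k) * x ^ (i + 1 + k)‖) := by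
              apply hsatail.congr
              intro i
              rw [Real.norm_eq_abs, abs_mul, abs_pow, abs_of_pos hx]
            simpa only [Real.norm_eq_abs] using norm_tsum_le_tsum_norm hnrm
        _ = ∑' i, |a (i + 1 + k)| * x ^ (i + 1 + k) := by
            congr 1; funext i; rw [abs_mul, abs_pow, abs_of_pos hx]
    have hterm : ∀ i, |a (i + 1 + k)| * x ^ (i + 1 + k) ≤
        x ^ (k + 1) * ((x0 ^ (k + 1))⁻¹ * (|a (i + 1 + k)| * x0 ^ (i + 1 + k))) := by
      intro i
      have h1 : x ^ (i + 1 + k) = x ^ (k + 1) * x ^ i := by ring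
      have h2 : x0 ^ (i + 1 + k) = x0 ^ (k + 1) * x0 ^ i := by ring
      rw [h1, h2]
      have hxi : x ^ i ≤ x0 ^ i := pow_le_pow_left₀ hx.le hxx0 i
      have : (x0 ^ (k+1))⁻¹ * (|a (i+1+k)| * (x0 ^ (k+1) * x0 ^ i)) =
          |a (i+1+k)| * x0 ^ i := by field_simp
      rw [this]
      have := mul_le_mul_of_nonneg_left hxi (abs_nonneg (a (i+1+k)))
      nlinarith [pow_pos hx (k+1), abs_nonneg (a (i+1+k)), pow_nonneg hx.le i,
        pow_pos hx00 i]
    have hbound1 : ∑' i, |a (i + 1 + k)| * x ^ (i + 1 + k) ≤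
        x ^ (k + 1) * ((x0 ^ (k + 1))⁻¹ * ∑' i, |a (i + 1 + k)| * x0 ^ (i + 1 + k)) := by
      rw [← tsum_mul_left, ← tsum_mul_left]
      exact Summable.tsum_le_tsum hterm hsatail (by
        exact (hsx0tail.mul_left _).mul_left _)
    have htailS : ∑' i, |a (i + 1 + k)| * x0 ^ (i + 1 + k) ≤ S := by
      rw [hSdef]
      have := Summable.sum_add_tsum_nat_add (f := fun j => |a j| * x0 ^ j) (k+1) hsx0
      have hnn : 0 ≤ ∑ i ∈ Finset.range (k+1), |a i| * x0 ^ i :=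
        Finset.sum_nonneg fun i _ => by positivity
      have heqidx : (∑' i, |a (i + (k+1))| * x0 ^ (i + (k+1))) =
          ∑' i, |a (i + 1 + k)| * x0 ^ (i + 1 + k) := by
        congr 1; funext i
        have hidx : i + (k+1) = i + 1 + k := by omega
        rw [hidx]
      linarith [heqidx ▸ this]
    have hxk : 0 < x ^ k := pow_pos hx k
    -- combine
    have : |a k| * x ^ k ≤ x ^ (k+1) * ((x0 ^ (k+1))⁻¹ * S) := by
      calc |a k| * x ^ k ≤ _ := hbound0
        _ ≤ _ := hbound1
        _ ≤ x ^ (k+1) * ((x0 ^ (k+1))⁻¹ * S) := by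
            exact mul_le_mul_of_nonneg_left
              (mul_le_mul_of_nonneg_left htailS (by positivity)) (by positivity)
    have hfin : |a k| ≤ M * x := by
      rw [hMdef]
      have hxk1 : x ^ (k+1) = x ^ k * x := by ring
      rw [hxk1] at this
      have h1 : (0:ℝ) < x0 ^ (k+1) := pow_pos hx00 _
      rw [div_eq_mul_inv]
      nlinarith
    exact hfin
  -- conclude a k = 0
  by_contra hne
  have hak : 0 < |a k| := abs_pos.mpr hne
  set x : ℝ := min x0 (|a k| / (2 * (M + 1))) with hxdef
  have hx : 0 < x := lt_min hx00 (by positivity)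
  have h1 := claim x hx (min_le_left _ _)
  have h2 : x ≤ |a k| / (2 * (M + 1)) := min_le_right _ _
  have : M * x ≤ M * (|a k| / (2 * (M + 1))) := mul_le_mul_of_nonneg_left h2 hM0
  have hlt : M * (|a k| / (2 * (M + 1))) < |a k| := by
    have hkey : M * |a k| / (2 * (M + 1)) < |a k| :=
      (div_lt_iff₀ (show (0:ℝ) < 2 * (M + 1) by positivity)).mpr (by nlinarith)
    calc M * (|a k| / (2 * (M + 1))) = M * |a k| / (2 * (M + 1)) := by ring
      _ < |a k| := hkey
  linarith

lemma sum2 (c : ℕ × ℕ → ℝ) (δ : ℝ) (hδ : 0 < δ)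
    (hs : ∀ x ∈ Ioo (0:ℝ) δ, ∀ y ∈ Ioo (0:ℝ) δ,
      Summable (fun k : ℕ × ℕ => |c k| * x ^ k.1 * y ^ k.2))
    (h0 : ∀ x ∈ Ioo (0:ℝ) δ, ∀ y ∈ Ioo (0:ℝ) δ,
      ∑' k : ℕ × ℕ, c k * x ^ k.1 * y ^ k.2 = 0) : ∀ k, c k = 0 := by
  have step1 : ∀ y ∈ Ioo (0:ℝ) δ, ∀ r, ∑' j, c (r, j) * y ^ j = 0 := by
    intro y hy
    apply sum1 (fun r => ∑' j, c (r, j) * y ^ j) δ hδ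
    · intro x hx
      have habs : Summable (fun k : ℕ × ℕ => |c k| * x ^ k.1 * y ^ k.2) := hs x hx y hy
      have hnn : 0 ≤ fun k : ℕ × ℕ => |c k| * x ^ k.1 * y ^ k.2 := fun k =>
        mul_nonneg (mul_nonneg (abs_nonneg _) (pow_nonneg hx.1.le _)) (pow_nonneg hy.1.le _)
      have hfac := (summable_prod_of_nonneg hnn).mp habs
      apply Summable.of_nonneg_of_le
        (fun r => mul_nonneg (abs_nonneg _) (pow_nonneg hx.1.le _)) (fun r => ?_) hfac.2
      have hinner : Summable (fun j => |c (r, j)| * x ^ r * y ^ j) := habs.prod_factor r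
      have hinner' : Summable (fun j => |c (r, j)| * y ^ j) := by
        have h2 := hinner.mul_left ((x ^ r)⁻¹)
        apply h2.congr
        intro j
        have hxr : x ^ r ≠ 0 := pow_ne_zero r (ne_of_gt hx.1)
        field_simp
      have h1 : |∑' j, c (r, j) * y ^ j| ≤ ∑' j, |c (r, j)| * y ^ j := by
        have hn : Summable (fun j => ‖c (r, j) * y ^ j‖) := by
          apply hinner'.congr
          intro j
          rw [Real.norm_eq_abs, abs_mul, abs_pow, abs_of_pos hy.1]
        calc |∑' j, c (r, j) * y ^ j| ≤ ∑' j, |c (r, j) * y ^ j| := by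
              simpa only [Real.norm_eq_abs] using norm_tsum_le_tsum_norm hn
          _ = ∑' j, |c (r, j)| * y ^ j :=
              tsum_congr fun j => by rw [abs_mul, abs_pow, abs_of_pos hy.1]
      calc |∑' j, c (r, j) * y ^ j| * x ^ r
          ≤ (∑' j, |c (r, j)| * y ^ j) * x ^ r :=
            mul_le_mul_of_nonneg_right h1 (pow_nonneg hx.1.le _)
        _ = ∑' j, |c (r, j)| * x ^ r * y ^ j := by
            rw [← tsum_mul_right]
            exact tsum_congr fun j => by ring
    · intro x hx
      have habs : Summable (fun k : ℕ × ℕ => |c k| * x ^ k.1 * y ^ k.2) := hs x hx y hy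
      have hsum : Summable (fun k : ℕ × ℕ => c k * x ^ k.1 * y ^ k.2) := by
        apply Summable.of_abs
        apply habs.congr
        intro k
        rw [abs_mul, abs_mul, abs_pow, abs_pow, abs_of_pos hx.1, abs_of_pos hy.1]
      have h00 := h0 x hx y hy
      rw [Summable.tsum_prod hsum] at h00
      rw [← h00]
      apply tsum_congr
      intro r
      rw [← tsum_mul_right]
      exact tsum_congr fun j => by ring
  intro k
  obtain ⟨r, j⟩ := k
  refine sum1 (fun j => c (r, j)) δ hδ (fun y hy => ?_) (fun y hy => step1 y hy r) j
  have hx0 : (δ/2) ∈ Ioo (0:ℝ) δ := ⟨by positivity, by linarith⟩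
  have habs := hs (δ/2) hx0 y hy
  have hinner : Summable (fun j => |c (r, j)| * (δ/2) ^ r * y ^ j) := habs.prod_factor r
  have h2 := hinner.mul_left (((δ/2) ^ r)⁻¹)
  apply h2.congr
  intro i
  have hxr : ((δ:ℝ)/2) ^ r ≠ 0 := pow_ne_zero r (by positivity)
  field_simp

lemma sum3 (c : ℕ × ℕ × ℕ → ℝ) (δ : ℝ) (hδ : 0 < δ)
    (hs : ∀ x ∈ Ioo (0:ℝ) δ, ∀ y ∈ Ioo (0:ℝ) δ, ∀ z ∈ Ioo (0:ℝ) δ,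
      Summable (fun k : ℕ × ℕ × ℕ => |c k| * x ^ k.1 * y ^ k.2.1 * z ^ k.2.2))
    (h0 : ∀ x ∈ Ioo (0:ℝ) δ, ∀ y ∈ Ioo (0:ℝ) δ, ∀ z ∈ Ioo (0:ℝ) δ,
      ∑' k : ℕ × ℕ × ℕ, c k * x ^ k.1 * y ^ k.2.1 * z ^ k.2.2 = 0) : ∀ k, c k = 0 := by
  have step1 : ∀ y ∈ Ioo (0:ℝ) δ, ∀ z ∈ Ioo (0:ℝ) δ, ∀ r,
      ∑' pq : ℕ × ℕ, c (r, pq) * y ^ pq.1 * z ^ pq.2 = 0 := by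
    intro y hy z hz
    apply sum1 (fun r => ∑' pq : ℕ × ℕ, c (r, pq) * y ^ pq.1 * z ^ pq.2) δ hδ
    · intro x hx
      have habs := hs x hx y hy z hz
      have hnn : 0 ≤ fun k : ℕ × ℕ × ℕ => |c k| * x ^ k.1 * y ^ k.2.1 * z ^ k.2.2 := fun k =>
        mul_nonneg (mul_nonneg (mul_nonneg (abs_nonneg _) (pow_nonneg hx.1.le _))
          (pow_nonneg hy.1.le _)) (pow_nonneg hz.1.le _)
      have hfac := (summable_prod_of_nonneg hnn).mp habs
      apply Summable.of_nonneg_of_le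
        (fun r => mul_nonneg (abs_nonneg _) (pow_nonneg hx.1.le _)) (fun r => ?_) hfac.2
      have hinner : Summable (fun pq : ℕ × ℕ => |c (r, pq)| * x ^ r * y ^ pq.1 * z ^ pq.2) :=
        habs.prod_factor r
      have hinner' : Summable (fun pq : ℕ × ℕ => |c (r, pq)| * y ^ pq.1 * z ^ pq.2) := by
        have h2 := hinner.mul_left ((x ^ r)⁻¹)
        apply h2.congr
        intro pq
        have hxr : x ^ r ≠ 0 := pow_ne_zero r (ne_of_gt hx.1)
        field_simp
      have h1 : |∑' pq : ℕ × ℕ, c (r, pq) * y ^ pq.1 * z ^ pq.2| ≤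
          ∑' pq : ℕ × ℕ, |c (r, pq)| * y ^ pq.1 * z ^ pq.2 := by
        have hn : Summable (fun pq : ℕ × ℕ => ‖c (r, pq) * y ^ pq.1 * z ^ pq.2‖) := by
          apply hinner'.congr
          intro pq
          rw [Real.norm_eq_abs, abs_mul, abs_mul, abs_pow, abs_pow,
            abs_of_pos hy.1, abs_of_pos hz.1]
        calc |∑' pq : ℕ × ℕ, c (r, pq) * y ^ pq.1 * z ^ pq.2|
            ≤ ∑' pq : ℕ × ℕ, |c (r, pq) * y ^ pq.1 * z ^ pq.2| := by
              simpa only [Real.norm_eq_abs] using norm_tsum_le_tsum_norm hn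
          _ = ∑' pq : ℕ × ℕ, |c (r, pq)| * y ^ pq.1 * z ^ pq.2 :=
              tsum_congr fun pq => by
                rw [abs_mul, abs_mul, abs_pow, abs_pow, abs_of_pos hy.1, abs_of_pos hz.1]
      calc |∑' pq : ℕ × ℕ, c (r, pq) * y ^ pq.1 * z ^ pq.2| * x ^ r
          ≤ (∑' pq : ℕ × ℕ, |c (r, pq)| * y ^ pq.1 * z ^ pq.2) * x ^ r :=
            mul_le_mul_of_nonneg_right h1 (pow_nonneg hx.1.le _)
        _ = ∑' pq : ℕ × ℕ, |c (r, pq)| * x ^ r * y ^ pq.1 * z ^ pq.2 := by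
            rw [← tsum_mul_right]
            exact tsum_congr fun pq => by ring
    · intro x hx
      have habs := hs x hx y hy z hz
      have hsum : Summable (fun k : ℕ × ℕ × ℕ => c k * x ^ k.1 * y ^ k.2.1 * z ^ k.2.2) := by
        apply Summable.of_abs
        apply habs.congr
        intro k
        rw [abs_mul, abs_mul, abs_mul, abs_pow, abs_pow, abs_pow,
          abs_of_pos hx.1, abs_of_pos hy.1, abs_of_pos hz.1]
      have h00 := h0 x hx y hy z hz
      rw [Summable.tsum_prod hsum] at h00
      rw [← h00]
      apply tsum_congr
      intro r
      rw [← tsum_mul_right]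
      exact tsum_congr fun pq => by ring
  intro k
  obtain ⟨r, pq⟩ := k
  refine sum2 (fun pq => c (r, pq)) δ hδ (fun y hy z hz => ?_)
    (fun y hy z hz => step1 y hy z hz r) pq
  have hx0 : (δ/2) ∈ Ioo (0:ℝ) δ := ⟨by positivity, by linarith⟩
  have habs := hs (δ/2) hx0 y hy z hz
  have hinner : Summable (fun pq : ℕ × ℕ => |c (r, pq)| * (δ/2) ^ r * y ^ pq.1 * z ^ pq.2) :=
    habs.prod_factor r
  have h2 := hinner.mul_left (((δ/2) ^ r)⁻¹)
  apply h2.congr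
  intro pq'
  have hxr : ((δ:ℝ)/2) ^ r ≠ 0 := pow_ne_zero r (by positivity)
  field_simp

def zv(n : ℕ) (a b : ℝ) : Fin n → ℂ := fun i =>
  if i.1 = 0 then (a : ℂ) else if i.1 = n - 1 then (b : ℂ) else 0

lemma zv_last {n : ℕ} (hn : 2 ≤ n) (a b : ℝ) (h : n - 1 < n) :
    zv n a b ⟨n - 1, h⟩ = (b : ℂ) := by
  unfold zv
  rw [if_neg (by simp; omega), if_pos rfl]

lemma zv_star (n : ℕ) (a b : ℝ) : star (zv n a b) = zv n a b := by
  funext i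
  simp only [Pi.star_apply, zv]
  split_ifs <;> simp

lemma zv_zero (n : ℕ) : zv n 0 0 = 0 := by
  funext i
  simp only [zv]
  split_ifs <;> simp

lemma Q_zv {n m : ℕ} (hm : 1 ≤ m) (hnm : 2 * m ≤ n) (a b : ℝ) :
    dotProduct (zv n a b) ((Hmat n m).mulVec (star (zv n a b)))
      = ((2 * a * b : ℝ) : ℂ) := by
  have hn : 2 ≤ n := by omega
  rw [zv_star]
  set j0 : Fin n := ⟨0, by omega⟩ with hj0
  set j1 : Fin n := ⟨n - 1, by omega⟩ with hj1
  have hne : j0 ≠ j1 := by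
    simp only [hj0, hj1, Fin.mk.injEq, ne_eq]
    omega
  have hzv0 : zv n a b j0 = (a : ℂ) := by
    unfold zv; rw [if_pos rfl]
  have hzv1 : zv n a b j1 = (b : ℂ) := zv_last hn a b _
  have hzvo : ∀ j : Fin n, j ≠ j0 → j ≠ j1 → zv n a b j = 0 := by
    intro j h0 h1
    unfold zv
    rw [if_neg, if_neg]
    · intro h; exact h1 (Fin.ext h)
    · intro h; exact h0 (Fin.ext h)
  -- entries of Hmat
  have h00 : Hmat n m j0 j0 = 0 := by
    unfold Hmat
    rw [if_neg, if_neg]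
    · rintro ⟨-, h, -⟩; simp [hj0] at h; omega
    · rintro ⟨h, -⟩; simp [hj0] at h; omega
  have h01 : Hmat n m j0 j1 = 1 := by
    unfold Hmat
    rw [if_pos]
    exact ⟨by simp [hj0, hj1]; omega, Or.inl (by simp [hj0]; omega)⟩
  have h10 : Hmat n m j1 j0 = 1 := by
    unfold Hmat
    rw [if_pos]
    exact ⟨by simp [hj0, hj1]; omega, Or.inr (by simp [hj1]; omega)⟩
  have h11 : Hmat n m j1 j1 = 0 := by
    unfold Hmat
    rw [if_neg, if_neg]
    · rintro ⟨-, h1, h2⟩; simp [hj1] at h1 h2; omega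
    · rintro ⟨h, -⟩; simp [hj1] at h; omega
  -- compute mulVec
  have hsum2 : ∀ f : Fin n → ℂ, (∀ j, j ≠ j0 → j ≠ j1 → f j = 0) →
      (∑ j, f j) = f j0 + f j1 := by
    intro f hf
    rw [← Finset.sum_pair hne]
    symm
    apply Finset.sum_subset (Finset.subset_univ _)
    intro j _ hj
    simp only [Finset.mem_insert, Finset.mem_singleton] at hj
    push_neg at hj
    exact hf j hj.1 hj.2
  have hmv : ∀ i, (Hmat n m).mulVec (zv n a b) i
      = Hmat n m i j0 * (a : ℂ) + Hmat n m i j1 * (b : ℂ) := by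
    intro i
    show (∑ j, Hmat n m i j * zv n a b j) = _
    rw [hsum2 (fun j => Hmat n m i j * zv n a b j)
      (fun j hj0' hj1' => by rw [hzvo j hj0' hj1', mul_zero])]
    rw [hzv0, hzv1]
  show (∑ i, zv n a b i * (Hmat n m).mulVec (zv n a b) i) = _
  rw [hsum2 (fun i => zv n a b i * (Hmat n m).mulVec (zv n a b) i)
    (fun i hi0 hi1 => by rw [hzvo i hi0 hi1, zero_mul])]
  rw [hzv0, hzv1, hmv j0, hmv j1, h00, h01, h10, h11]
  push_cast
  ring

lemma zv_scale {n : ℕ} (hn : 2 ≤ n) (lam mu a b : ℝ) (hmu : mu ≠ 0)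
    (U : Matrix (Fin n) (Fin n) ℂ)
    (hU : U = Matrix.diagonal (fun i : Fin n =>
      if i.1 = 0 then (mu : ℂ) else if i.1 = n - 1 then (mu : ℂ)⁻¹ else 1)) :
    lam • U.mulVec (zv n a b) = zv n (lam * mu * a) (lam * b / mu) := by
  funext i
  rw [hU]
  simp only [Pi.smul_apply, Matrix.mulVec_diagonal]
  unfold zv
  by_cases h0 : i.1 = 0
  · rw [if_pos h0, if_pos h0, if_pos h0, Complex.real_smul]
    push_cast
    ring
  · rw [if_neg h0, if_neg h0, if_neg h0]
    by_cases h1 : i.1 = n - 1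
    · rw [if_pos h1, if_pos h1, if_pos h1, Complex.real_smul]
      have hmuc : (mu : ℂ) ≠ 0 := by exact_mod_cast hmu
      push_cast
      field_simp
    · rw [if_neg h1, if_neg h1, if_neg h1, mul_zero, smul_zero]

/-- Relation (rellammu): if F(z,u) = Σ' C_{rpq} u^r |zₙ|^{2p} ⟨z,z⟩^q converges
absolutely near the origin and satisfies F(λUz, λ²u) = λ²F(z,u) there, where
U = diag(μ, 1, …, 1, 1/μ) ∈ U(H) and λ, μ > 0, λ ≠ 1, μ ≠ 1, then every
non-zero coefficient C_{rpq} satisfies λ^{r+p+q−1} = μ^p. -/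
theorem stmt19 {n m : ℕ} (hm : 1 ≤ m) (hnm : 2 * m ≤ n)
    (lam mu : ℝ) (hlam0 : 0 < lam) (hlam1 : lam ≠ 1) (hmu0 : 0 < mu) (hmu1 : mu ≠ 1)
    (U : Matrix (Fin n) (Fin n) ℂ)
    (hU : U = Matrix.diagonal (fun i : Fin n =>
      if i.1 = 0 then (mu : ℂ) else if i.1 = n - 1 then (mu : ℂ)⁻¹ else 1))
    (C : ℕ × ℕ × ℕ → ℝ)
    (F : (Fin n → ℂ) → ℝ → ℝ)
    (hFdef : ∀ (z : Fin n → ℂ) (u : ℝ), F z u =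
      ∑' k : ℕ × ℕ × ℕ, C k * u ^ k.1 * ‖z ⟨n - 1, by omega⟩‖ ^ (2 * k.2.1) *
        ((dotProduct z ((Hmat n m).mulVec (star z))).re) ^ k.2.2)
    (V : Set ((Fin n → ℂ) × ℝ)) (hV : V ∈ nhds (0 : (Fin n → ℂ) × ℝ))
    (hsum : ∀ p ∈ V, Summable (fun k : ℕ × ℕ × ℕ =>
      |C k| * |p.2| ^ k.1 * ‖p.1 ⟨n - 1, by omega⟩‖ ^ (2 * k.2.1) *
        |(dotProduct p.1 ((Hmat n m).mulVec (star p.1))).re| ^ k.2.2))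
    (heq : ∀ p ∈ V, F (lam • U.mulVec p.1) (lam ^ 2 * p.2) = lam ^ 2 * F p.1 p.2) :
    ∀ r p q : ℕ, C (r, p, q) ≠ 0 →
      lam ^ (((r + p + q : ℕ) : ℝ) - 1) = mu ^ p := by
  intro r p q hCrpq
  have hn2 : 2 ≤ n := by omega
  have hmune : mu ≠ 0 := ne_of_gt hmu0
  -- continuity setup
  have hzvcont : Continuous (fun w : ℝ × ℝ × ℝ => zv n w.2.1 w.2.2) := by
    apply continuous_pi
    intro i
    unfold zv
    split_ifs
    · exact Complex.continuous_ofReal.comp (continuous_fst.comp continuous_snd)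
    · exact Complex.continuous_ofReal.comp (continuous_snd.comp continuous_snd)
    · exact continuous_const
  have hmulcont : Continuous (fun v : Fin n → ℂ => lam • U.mulVec v) := by
    refine Continuous.const_smul (g := fun v : Fin n → ℂ => U.mulVec v) ?_ lam
    apply continuous_pi
    intro i
    show Continuous fun v : Fin n → ℂ => ∑ j, U i j * v j
    exact continuous_finset_sum _ fun j _ => continuous_const.mul (continuous_apply j)
  have hW : (fun w : ℝ × ℝ × ℝ => ((zv n w.2.1 w.2.2, w.1) : (Fin n → ℂ) × ℝ)) ⁻¹' V ∩
      (fun w : ℝ × ℝ × ℝ => ((lam • U.mulVec (zv n w.2.1 w.2.2), lam ^ 2 * w.1) :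
        (Fin n → ℂ) × ℝ)) ⁻¹' V ∈ nhds (0 : ℝ × ℝ × ℝ) := by
    apply Filter.inter_mem
    · apply (hzvcont.prodMk continuous_fst).continuousAt.preimage_mem_nhds
      simpa [zv_zero, Prod.mk_zero_zero] using hV
    · apply ((hmulcont.comp hzvcont).prodMk
        (continuous_const.mul continuous_fst)).continuousAt.preimage_mem_nhds
      simpa [zv_zero, Prod.mk_zero_zero] using hV
  obtain ⟨δ, hδ0, hball⟩ := Metric.mem_nhds_iff.mp hW
  have hmem : ∀ u a b : ℝ, u ∈ Ioo (0:ℝ) δ → a ∈ Ioo (0:ℝ) δ → b ∈ Ioo (0:ℝ) δ →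
      ((zv n a b, u) : (Fin n → ℂ) × ℝ) ∈ V ∧
      ((lam • U.mulVec (zv n a b), lam ^ 2 * u) : (Fin n → ℂ) × ℝ) ∈ V := by
    intro u a b hu ha hb
    have : ((u, a, b) : ℝ × ℝ × ℝ) ∈ Metric.ball (0 : ℝ × ℝ × ℝ) δ := by
      simp only [Metric.mem_ball, Prod.dist_eq, Prod.fst_zero, Prod.snd_zero,
        Real.dist_eq, sub_zero]
      rw [abs_of_pos hu.1, abs_of_pos ha.1, abs_of_pos hb.1]
      exact max_lt hu.2 (max_lt ha.2 hb.2)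
    exact ⟨(hball this).1, (hball this).2⟩
  -- coefficient functions
  set A : ℕ × ℕ × ℕ → ℝ := fun k =>
    lam ^ (2 * k.1) * (lam / mu) ^ (2 * k.2.1) * lam ^ (2 * k.2.2) with hA
  set E : ℕ × ℕ × ℕ → ℝ := fun k => C k * (A k - lam ^ 2) with hE
  set ι : ℕ × ℕ × ℕ → ℕ × ℕ × ℕ := fun k => (k.1, k.2.2, 2 * k.2.1 + k.2.2) with hι
  set c : ℕ × ℕ × ℕ → ℝ := fun k =>
    if k.2.1 ≤ k.2.2 ∧ (k.2.2 - k.2.1) % 2 = 0 then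
      E (k.1, (k.2.2 - k.2.1) / 2, k.2.1) * 2 ^ k.2.1 else 0 with hc
  have hιinj : Function.Injective ι := by
    intro k k' h
    simp only [hι, Prod.mk.injEq] at h
    have h1 := h.1
    have h2 := h.2.1
    have h3 := h.2.2
    have : k.2.1 = k'.2.1 := by omega
    exact Prod.ext h1 (Prod.ext this h2)
  have hcι : ∀ k : ℕ × ℕ × ℕ, c (ι k) = E k * 2 ^ k.2.2 := by
    intro k
    simp only [hc, hι]
    rw [if_pos (by constructor <;> omega)]
    have e1 : (2 * k.2.1 + k.2.2 - k.2.2) / 2 = k.2.1 := by omega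
    rw [e1]
  have hcrange : ∀ k, k ∉ Set.range ι → c k = 0 := by
    intro k hk
    simp only [hc]
    rw [if_neg]
    intro hcond
    apply hk
    refine ⟨(k.1, (k.2.2 - k.2.1) / 2, k.2.1), ?_⟩
    simp only [hι]
    have : 2 * ((k.2.2 - k.2.1) / 2) + k.2.1 = k.2.2 := by omega
    rw [this]
  -- the main analytic input
  have hmain : ∀ u ∈ Ioo (0:ℝ) δ, ∀ a ∈ Ioo (0:ℝ) δ, ∀ b ∈ Ioo (0:ℝ) δ,
      Summable (fun k : ℕ × ℕ × ℕ => |c k| * u ^ k.1 * a ^ k.2.1 * b ^ k.2.2) ∧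
      (∑' k : ℕ × ℕ × ℕ, c k * u ^ k.1 * a ^ k.2.1 * b ^ k.2.2) = 0 := by
    intro u hu a ha b hb
    obtain ⟨hPV, hP'V⟩ := hmem u a b hu ha hb
    set a' : ℝ := lam * mu * a with ha'
    set b' : ℝ := lam * b / mu with hb'
    have ha'0 : 0 < a' := mul_pos (mul_pos hlam0 hmu0) ha.1
    have hb'0 : 0 < b' := div_pos (mul_pos hlam0 hb.1) hmu0
    have hvec : lam • U.mulVec (zv n a b) = zv n a' b' := zv_scale hn2 lam mu a b hmune U hU
    rw [hvec] at hP'V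
    have hQ : (dotProduct (zv n a b) ((Hmat n m).mulVec (star (zv n a b)))).re
        = 2 * a * b := by
      rw [Q_zv hm hnm]; exact Complex.ofReal_re _
    have hQ' : (dotProduct (zv n a' b') ((Hmat n m).mulVec (star (zv n a' b')))).re
        = 2 * a' * b' := by
      rw [Q_zv hm hnm]; exact Complex.ofReal_re _
    have hlu : (0:ℝ) < lam ^ 2 * u := mul_pos (pow_pos hlam0 2) hu.1
    have hab : (0:ℝ) < 2 * a * b := by
      have := ha.1; have := hb.1; positivity
    have ha'b' : (0:ℝ) < 2 * a' * b' := by positivity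
    have hlast : ∀ (h : n - 1 < n), ‖zv n a b ⟨n - 1, h⟩‖ = b := by
      intro h
      rw [zv_last hn2, Complex.norm_real, Real.norm_eq_abs, abs_of_pos hb.1]
    have hlast' : ∀ (h : n - 1 < n), ‖zv n a' b' ⟨n - 1, h⟩‖ = b' := by
      intro h
      rw [zv_last hn2, Complex.norm_real, Real.norm_eq_abs, abs_of_pos hb'0]
    -- summability at the two points
    have hsumP : Summable (fun k : ℕ × ℕ × ℕ =>
        |C k| * u ^ k.1 * b ^ (2 * k.2.1) * (2 * a * b) ^ k.2.2) := by
      apply (hsum _ hPV).congr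
      intro k
      simp only
      rw [hlast, hQ, abs_of_pos hu.1, abs_of_pos hab]
    have hsumP' : Summable (fun k : ℕ × ℕ × ℕ =>
        |C k| * (lam ^ 2 * u) ^ k.1 * b' ^ (2 * k.2.1) * (2 * a' * b') ^ k.2.2) := by
      apply (hsum _ hP'V).congr
      intro k
      simp only
      rw [hlast', hQ', abs_of_pos hlu, abs_of_pos ha'b']
    have hsumPr : Summable (fun k : ℕ × ℕ × ℕ =>
        C k * u ^ k.1 * b ^ (2 * k.2.1) * (2 * a * b) ^ k.2.2) := by
      apply Summable.of_abs
      apply hsumP.congr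
      intro k
      rw [abs_mul, abs_mul, abs_mul, abs_pow, abs_pow, abs_pow,
        abs_of_pos hu.1, abs_of_pos hb.1, abs_of_pos hab]
    have hsumP'r : Summable (fun k : ℕ × ℕ × ℕ =>
        C k * (lam ^ 2 * u) ^ k.1 * b' ^ (2 * k.2.1) * (2 * a' * b') ^ k.2.2) := by
      apply Summable.of_abs
      apply hsumP'.congr
      intro k
      rw [abs_mul, abs_mul, abs_mul, abs_pow, abs_pow, abs_pow,
        abs_of_pos hlu, abs_of_pos hb'0, abs_of_pos ha'b']
    -- F values
    have hFP : F (zv n a b) u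
        = ∑' k : ℕ × ℕ × ℕ, C k * u ^ k.1 * b ^ (2 * k.2.1) * (2 * a * b) ^ k.2.2 := by
      rw [hFdef]
      exact tsum_congr fun k => by rw [hlast, hQ]
    have hFP' : F (zv n a' b') (lam ^ 2 * u)
        = ∑' k : ℕ × ℕ × ℕ,
          C k * (lam ^ 2 * u) ^ k.1 * b' ^ (2 * k.2.1) * (2 * a' * b') ^ k.2.2 := by
      rw [hFdef]
      exact tsum_congr fun k => by rw [hlast', hQ']
    have hrel := heq (zv n a b, u) hPV
    simp only at hrel
    rw [hvec] at hrel
    -- key pointwise identities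
    have t1 : ∀ r' : ℕ, (lam ^ 2 * u) ^ r' = lam ^ (2 * r') * u ^ r' := by
      intro r'; rw [mul_pow, ← pow_mul]
    have t2 : ∀ p' : ℕ, b' ^ (2 * p') = (lam / mu) ^ (2 * p') * b ^ (2 * p') := by
      intro p'
      rw [hb', show lam * b / mu = (lam / mu) * b by ring, mul_pow]
    have t3 : ∀ q' : ℕ, (2 * a' * b') ^ q' = lam ^ (2 * q') * (2 * a * b) ^ q' := by
      intro q'
      rw [show 2 * a' * b' = lam ^ 2 * (2 * a * b) by rw [ha', hb']; field_simp,
        mul_pow, ← pow_mul]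
    constructor
    · -- summability
      rw [← hιinj.summable_iff (f := fun k : ℕ × ℕ × ℕ =>
          |c k| * u ^ k.1 * a ^ k.2.1 * b ^ k.2.2)
        (fun k hk => by simp only [hcrange k hk, abs_zero, zero_mul])]
      apply Summable.of_nonneg_of_le (fun k => ?_) (fun k => ?_)
        (hsumP'.add (hsumP.mul_left (lam ^ 2)))
      · have h1 := hu.1.le; have h2 := ha.1.le; have h3 := hb.1.le
        simp only [Function.comp_apply]
        positivity
      · obtain ⟨r', p', q'⟩ := k
        simp only [Function.comp_apply, hι, hcι]
        rw [hcι (r', p', q')]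
        simp only [hE]
        have expand : u ^ r' * a ^ q' * b ^ (2 * p' + q') * (2:ℝ) ^ q'
            = u ^ r' * b ^ (2 * p') * (2 * a * b) ^ q' := by
          rw [pow_add, mul_pow, mul_pow]; ring
        have hEbound : |C (r', p', q') * (A (r', p', q') - lam ^ 2)|
            ≤ |C (r', p', q')| * (A (r', p', q') + lam ^ 2) := by
          rw [abs_mul]
          apply mul_le_mul_of_nonneg_left _ (abs_nonneg _)
          have hA0 : 0 ≤ A (r', p', q') := by
            simp only [hA]
            positivity
          have hl2 : (0:ℝ) ≤ lam ^ 2 := by positivity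
          calc |A (r', p', q') - lam ^ 2| ≤ |A (r', p', q')| + |lam ^ 2| := abs_sub _ _
            _ = A (r', p', q') + lam ^ 2 := by rw [abs_of_nonneg hA0, abs_of_nonneg hl2]
        calc |E (r', p', q') * 2 ^ q'| * u ^ r' * a ^ q' * b ^ (2 * p' + q')
            = |E (r', p', q')| * (u ^ r' * a ^ q' * b ^ (2 * p' + q') * (2:ℝ) ^ q') := by
              rw [abs_mul, abs_pow, abs_two]; ring
          _ = |E (r', p', q')| * (u ^ r' * b ^ (2 * p') * (2 * a * b) ^ q') := by
              rw [expand]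
          _ ≤ |C (r', p', q')| * (A (r', p', q') + lam ^ 2)
                * (u ^ r' * b ^ (2 * p') * (2 * a * b) ^ q') := by
              apply mul_le_mul_of_nonneg_right _ ?_
              · simpa only [hE] using hEbound
              · have h1 := hu.1.le; have h2 := hb.1.le; have h3 := hab.le
                positivity
          _ = |C (r', p', q')| * (A (r', p', q') * (u ^ r' * b ^ (2 * p') * (2 * a * b) ^ q'))
                + lam ^ 2 * (|C (r', p', q')| * u ^ r' * b ^ (2 * p') * (2 * a * b) ^ q') := by
              ring
          _ = |C (r', p', q')| * (lam ^ 2 * u) ^ r' * b' ^ (2 * p') * (2 * a' * b') ^ q'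
                + lam ^ 2 * (|C (r', p', q')| * u ^ r' * b ^ (2 * p') * (2 * a * b) ^ q') := by
              simp only [hA]
              rw [t1 r', t2 p', t3 q']
              ring
    · -- vanishing of the reindexed series
      have hsupp : Function.support
          (fun k : ℕ × ℕ × ℕ => c k * u ^ k.1 * a ^ k.2.1 * b ^ k.2.2) ⊆ Set.range ι := by
        intro k hk
        by_contra hkr
        apply hk
        simp only [Function.mem_support] at *
        rw [hcrange k hkr]
        ring
      rw [← hιinj.tsum_eq hsupp]
      have hptw : ∀ k : ℕ × ℕ × ℕ,
          (fun k : ℕ × ℕ × ℕ => c k * u ^ k.1 * a ^ k.2.1 * b ^ k.2.2) (ι k)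
          = C k * (lam ^ 2 * u) ^ k.1 * b' ^ (2 * k.2.1) * (2 * a' * b') ^ k.2.2
            - lam ^ 2 * (C k * u ^ k.1 * b ^ (2 * k.2.1) * (2 * a * b) ^ k.2.2) := by
        intro k
        obtain ⟨r', p', q'⟩ := k
        simp only [hι]
        rw [hcι (r', p', q')]
        simp only [hE, hA]
        rw [t1 r', t2 p', t3 q',
          show ((2:ℝ) * a * b) ^ q' = 2 ^ q' * a ^ q' * b ^ q' by rw [mul_pow, mul_pow],
          pow_add]
        ring
      rw [tsum_congr hptw,
        Summable.tsum_sub hsumP'r (hsumPr.mul_left (lam ^ 2)), tsum_mul_left, ← hFP', ← hFP, hrel]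
      ring
  -- apply uniqueness of coefficients
  have hczero := sum3 c δ hδ0
    (fun x hx y hy z hz => (hmain x hx y hy z hz).1)
    (fun x hx y hy z hz => (hmain x hx y hy z hz).2)
  have hEzero : E (r, p, q) * 2 ^ q = 0 := by
    rw [← hcι (r, p, q)]; exact hczero _
  have hE0 : E (r, p, q) = 0 :=
    (mul_eq_zero.mp hEzero).resolve_right (by positivity)
  have hbr : A (r, p, q) = lam ^ 2 := by
    simp only [hE] at hE0
    rcases mul_eq_zero.mp hE0 with h | h
    · exact absurd h hCrpq
    · exact sub_eq_zero.mp h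
  simp only [hA] at hbr
  have hkey : lam ^ (2 * (r + p + q)) = lam ^ 2 * mu ^ (2 * p) := by
    rw [div_pow] at hbr
    have hmup : (mu:ℝ) ^ (2 * p) ≠ 0 := by positivity
    field_simp at hbr
    rw [show 2 * (r + p + q) = 2 * r + 2 * p + 2 * q by ring, pow_add, pow_add]
    linear_combination hbr
  -- conclude via squares
  set x : ℝ := lam ^ (((r + p + q : ℕ) : ℝ) - 1) with hx
  have hxpos : 0 < x := Real.rpow_pos_of_pos hlam0 _
  have hsq : x ^ 2 = (mu ^ p) ^ 2 := by
    rw [hx, ← Real.rpow_natCast (lam ^ ((((r + p + q : ℕ) : ℝ)) - 1)) 2,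
      ← Real.rpow_mul hlam0.le,
      show ((((r + p + q : ℕ) : ℝ)) - 1) * ((2:ℕ):ℝ) = ((2 * (r + p + q) : ℕ) : ℝ) - ((2:ℕ):ℝ)
        by push_cast; ring,
      Real.rpow_sub hlam0, Real.rpow_natCast, Real.rpow_natCast, hkey,
      show 2 * p = p * 2 by ring, pow_mul]
    field_simp
  have hmp : 0 < mu ^ p := pow_pos hmu0 p
  have hfac : (x - mu ^ p) * (x + mu ^ p) = 0 := by linear_combination hsq
  rcases mul_eq_zero.mp hfac with h | h
  · exact sub_eq_zero.mp h
  · exfalso; nlinarith
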